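/- arXiv:1010.3889 — 2 statements merged into one kernel-verified Lean document; each statement's English description precedes it below -/
import Mathlib

section
/- (Proposition 2) For every integer n ≥ 0, the fermionic p-adic q-integral of x ↦ [1−x]_{1/q}^n exists and ∫_{ℤ_p} [1−x]_{1/q}^n dμ_{−q}(x) = Σ_{l=0}^{n} C(n,l)·(−1)^l·ξ_{l,q}, and this common value also equals (−1)^n·q^n·ξ_{n,q}(−1). -/
open Finset Filter

/-- `[a]_q = (1 - q^a)/(1 - q)` for `a : ℤ`. -/
noncomputable def qnum {p : ℕ} [Fact p.Prime] (q : ℚ_[p]) (a : ℤ) : ℚ_[p] :=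
  (1 - q ^ a) / (1 - q)

/-- Kim's q-Euler polynomial `ξ_{n,q}(x)` (closed form). -/
noncomputable def xi {p : ℕ} [Fact p.Prime] (q : ℚ_[p]) (n : ℕ) (x : ℤ) : ℚ_[p] :=
  ((1 + q) / (1 - q) ^ n) *
    ∑ l ∈ Finset.range (n + 1),
      (n.choose l : ℚ_[p]) * (-1) ^ l * q ^ ((l : ℤ) * x) / (1 + q ^ (l + 1))

/-- The fermionic p-adic `r`-integral statement:
`∫_{ℤ_p} g dμ_{-r} = L` means the Riemann-type sums
`(1/[p^N]_{-r}) · Σ_{x=0}^{p^N-1} g(x) (-r)^x` converge to `L`. -/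
def fermionicIntegral (p : ℕ) [Fact p.Prime] (r : ℚ_[p]) (g : ℕ → ℚ_[p]) (L : ℚ_[p]) : Prop :=
  Filter.Tendsto
    (fun N : ℕ => ((1 + r) / (1 - (-r) ^ (p ^ N))) * ∑ x ∈ Finset.range (p ^ N), g x * (-r) ^ x)
    Filter.atTop (nhds L)

/-- The q-Bernstein polynomial `B_{k,n}(x,q) = C(n,k) [x]_q^k [1-x]_{1/q}^{n-k}`. -/
noncomputable def bern {p : ℕ} [Fact p.Prime] (q : ℚ_[p]) (k n : ℕ) (x : ℤ) : ℚ_[p] :=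
  (n.choose k : ℚ_[p]) * (qnum q x) ^ k * (qnum q⁻¹ (1 - x)) ^ (n - k)

section aux
variable {p : ℕ} [Fact p.Prime] {q r : ℚ_[p]}

lemma aux_norm_le (hq : ‖1 - q‖ < 1) : ‖q‖ ≤ 1 := by
  have h : q = 1 + -(1 - q) := by ring
  rw [h]
  refine (Padic.nonarchimedean _ _).trans ?_
  simp only [norm_one, norm_neg]
  exact max_le le_rfl hq.le

lemma aux_pow_sub_one (hr : ‖r‖ ≤ 1) (m : ℕ) : ‖r ^ m - 1‖ ≤ ‖r - 1‖ := by
  induction m with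
  | zero => simp
  | succ m ih =>
    have h : r ^ (m + 1) - 1 = r ^ m * (r - 1) + (r ^ m - 1) := by ring
    rw [h]
    refine (Padic.nonarchimedean _ _).trans (max_le ?_ ih)
    calc ‖r ^ m * (r - 1)‖ = ‖r ^ m‖ * ‖r - 1‖ := norm_mul _ _
      _ ≤ 1 * ‖r - 1‖ := by
          gcongr
          simpa using pow_le_one₀ (norm_nonneg r) hr
      _ = ‖r - 1‖ := one_mul _

lemma aux_norm_two (hp : Odd p) : ‖(2 : ℚ_[p])‖ = 1 := by
  have h1 : ‖((2 : ℤ) : ℚ_[p])‖ ≤ 1 := Padic.norm_int_le_one _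
  have h2 : ¬ ‖((2 : ℤ) : ℚ_[p])‖ < 1 := by
    rw [Padic.norm_intCast_lt_one_iff]
    intro hdvd
    have hp2 : p ∣ 2 := by exact_mod_cast hdvd
    have := (Nat.prime_dvd_prime_iff_eq (Fact.out) Nat.prime_two).mp hp2
    subst this
    simp [Nat.odd_iff] at hp
  push_cast at h1 h2
  linarith [lt_or_eq_of_le h1]

lemma aux_step (hr : ‖r‖ ≤ 1) :
    ‖r ^ p - 1‖ ≤ ‖r - 1‖ * max ‖r - 1‖ ‖(p : ℚ_[p])‖ := by
  have h : r ^ p - 1 = (∑ i ∈ Finset.range p, r ^ i) * (r - 1) := (geom_sum_mul r p).symm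
  have hS : ‖∑ i ∈ Finset.range p, r ^ i‖ ≤ max ‖r - 1‖ ‖(p : ℚ_[p])‖ := by
    have hsum : (∑ i ∈ Finset.range p, r ^ i)
        = (p : ℚ_[p]) + ∑ i ∈ Finset.range p, (r ^ i - 1) := by
      rw [Finset.sum_sub_distrib]
      simp
    rw [hsum]
    refine (Padic.nonarchimedean _ _).trans (max_le (le_max_right _ _) ?_)
    refine le_max_of_le_left ?_
    exact IsUltrametricDist.norm_sum_le_of_forall_le_of_nonneg (norm_nonneg _)
      (fun i _ => aux_pow_sub_one hr i)
  calc ‖r ^ p - 1‖ = ‖∑ i ∈ Finset.range p, r ^ i‖ * ‖r - 1‖ := by rw [h, norm_mul]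
    _ ≤ (max ‖r - 1‖ ‖(p : ℚ_[p])‖) * ‖r - 1‖ := by
        exact mul_le_mul_of_nonneg_right hS (norm_nonneg _)
    _ = ‖r - 1‖ * max ‖r - 1‖ ‖(p : ℚ_[p])‖ := mul_comm _ _

lemma aux_tendsto (hr : ‖r - 1‖ < 1) :
    Tendsto (fun N : ℕ => r ^ p ^ N) atTop (nhds 1) := by
  set c : ℝ := max ‖r - 1‖ ‖(p : ℚ_[p])‖ with hc_def
  have hc1 : c < 1 := max_lt hr Padic.norm_p_lt_one
  have hc0 : 0 ≤ c := le_max_of_le_left (norm_nonneg _)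
  have key : ∀ N : ℕ, ‖r ^ p ^ N - 1‖ ≤ ‖r - 1‖ * c ^ N := by
    intro N
    induction N with
    | zero => simp
    | succ N ih =>
      have hcN : c ^ N ≤ 1 := pow_le_one₀ hc0 hc1.le
      have hle : ‖r - 1‖ * c ^ N ≤ ‖r - 1‖ := mul_le_of_le_one_right (norm_nonneg _) hcN
      have hsN : ‖r ^ p ^ N - 1‖ < 1 := lt_of_le_of_lt (ih.trans hle) hr
      have hs_le : ‖r ^ p ^ N‖ ≤ 1 := by
        refine aux_norm_le ?_
        rwa [norm_sub_rev]
      have hmax : max ‖r ^ p ^ N - 1‖ ‖(p : ℚ_[p])‖ ≤ c :=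
        max_le ((ih.trans hle).trans (le_max_left _ _)) (le_max_right _ _)
      have hpow : r ^ p ^ (N + 1) = (r ^ p ^ N) ^ p := by
        rw [pow_succ, pow_mul]
      rw [hpow]
      refine (aux_step (p := p) hs_le).trans ?_
      calc ‖r ^ p ^ N - 1‖ * max ‖r ^ p ^ N - 1‖ ‖(p : ℚ_[p])‖
          ≤ (‖r - 1‖ * c ^ N) * c := by
            exact mul_le_mul ih hmax (le_max_of_le_left (norm_nonneg _))
              (by positivity)
        _ = ‖r - 1‖ * c ^ (N + 1) := by ring
  rw [tendsto_iff_norm_sub_tendsto_zero]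
  refine squeeze_zero (fun N => norm_nonneg _) key ?_
  simpa using (tendsto_pow_atTop_nhds_zero_of_lt_one hc0 hc1).const_mul ‖r - 1‖

variable (hp : Odd p) (hq : ‖1 - q‖ < 1) (hq1 : q ≠ 1)

lemma hq0 (hq : ‖1 - q‖ < 1) : q ≠ 0 := by
  rintro rfl; simp at hq

lemma h1q (hq1 : q ≠ 1) : (1 : ℚ_[p]) - q ≠ 0 := sub_ne_zero.mpr (Ne.symm hq1)

lemma hden (hp : Odd p) (hq : ‖1 - q‖ < 1) (m : ℕ) : 1 + q ^ (m + 1) ≠ 0 := by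
  intro h
  have hqm : q ^ (m + 1) = -1 := by linear_combination h
  have h2 : ‖q ^ (m + 1) - 1‖ = 1 := by
    rw [hqm]
    have : (-1 : ℚ_[p]) - 1 = -2 := by ring
    rw [this, norm_neg, aux_norm_two hp]
  have h3 : ‖q ^ (m + 1) - 1‖ ≤ ‖q - 1‖ := aux_pow_sub_one (aux_norm_le hq) (m + 1)
  rw [norm_sub_rev] at hq
  linarith

lemma f_eq (hq : ‖1 - q‖ < 1) (hq1 : q ≠ 1) (x : ℕ) :
    qnum q⁻¹ (1 - (x : ℤ)) = (q ^ x - q) / (1 - q) := by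
  have h0 := hq0 hq
  have h1 := h1q hq1
  have hzp : (q⁻¹ : ℚ_[p]) ^ ((1 : ℤ) - (x : ℤ)) = q ^ x / q := by
    rw [inv_zpow, ← zpow_neg, neg_sub, zpow_sub₀ h0, zpow_natCast, zpow_one]
  have hinv : (1 : ℚ_[p]) - q⁻¹ ≠ 0 := by
    rw [sub_ne_zero]
    exact fun h => hq1 (by rw [← inv_inv q, ← h, inv_one])
  have h1' : (-1 : ℚ_[p]) + q ≠ 0 := fun h => h1 (by linear_combination -h)
  rw [qnum, hzp, div_eq_div_iff hinv h1]
  field_simp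
  ring

lemma geom_term (l x : ℕ) : (q ^ x) ^ l * (-q) ^ x = (-(q ^ (l + 1))) ^ x := by
  calc (q ^ x) ^ l * (-q) ^ x = (q ^ l) ^ x * (-q) ^ x := by
        rw [← pow_mul, ← pow_mul, mul_comm l x]
    _ = (q ^ l * (-q)) ^ x := (mul_pow _ _ _).symm
    _ = (-(q ^ (l + 1))) ^ x := by rw [show q ^ l * (-q) = -(q ^ (l + 1)) by ring]

lemma geom_sum_closed (hp : Odd p) (hq : ‖1 - q‖ < 1) (l : ℕ) {M : ℕ} (hM : Odd M) :
    ∑ x ∈ Finset.range M, (-(q ^ (l + 1))) ^ x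
      = (1 + (q ^ (l + 1)) ^ M) / (1 + q ^ (l + 1)) := by
  have hd := hden hp hq l
  have hne : (-(q ^ (l + 1)) : ℚ_[p]) ≠ 1 := by
    intro h
    exact hd (by linear_combination -h)
  rw [geom_sum_eq hne]
  rw [hM.neg_pow]
  rw [div_eq_div_iff (by intro h; exact hd (by linear_combination -h)) hd]
  ring

lemma main_sum (hp : Odd p) (hq : ‖1 - q‖ < 1) (n : ℕ) {M : ℕ} (hM : Odd M) :
    ∑ x ∈ Finset.range M, ((q ^ x - q) / (1 - q)) ^ n * (-q) ^ x
      = ∑ l ∈ Finset.range (n + 1),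
          (n.choose l : ℚ_[p]) * (-q) ^ (n - l) / (1 - q) ^ n
            * ((1 + (q ^ (l + 1)) ^ M) / (1 + q ^ (l + 1))) := by
  have h1 : ∀ x ∈ Finset.range M, ((q ^ x - q) / (1 - q)) ^ n * (-q) ^ x
      = ∑ l ∈ Finset.range (n + 1),
          (n.choose l : ℚ_[p]) * (-q) ^ (n - l) / (1 - q) ^ n * (-(q ^ (l + 1))) ^ x := by
    intro x _
    rw [div_pow, sub_eq_add_neg, add_pow, Finset.sum_div, Finset.sum_mul]
    refine Finset.sum_congr rfl fun l _ => ?_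
    calc (q ^ x) ^ l * (-q) ^ (n - l) * (n.choose l : ℚ_[p]) / (1 - q) ^ n * (-q) ^ x
        = ((q ^ x) ^ l * (-q) ^ x) * ((n.choose l : ℚ_[p]) * (-q) ^ (n - l) / (1 - q) ^ n) := by
          ring
      _ = _ := by rw [geom_term]; ring
  rw [Finset.sum_congr rfl h1, Finset.sum_comm]
  refine Finset.sum_congr rfl fun l _ => ?_
  rw [← Finset.mul_sum, geom_sum_closed hp hq l hM]

lemma integral_tendsto (hp : Odd p) (hq : ‖1 - q‖ < 1) (hq1 : q ≠ 1) (n : ℕ) :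
    Tendsto (fun N : ℕ => ((1 + q) / (1 - (-q) ^ (p ^ N)))
        * ∑ x ∈ Finset.range (p ^ N), (qnum q⁻¹ (1 - (x : ℤ))) ^ n * (-q) ^ x) atTop
      (nhds ((1 + q) / (1 - q) ^ n
        * ∑ l ∈ Finset.range (n + 1),
            (n.choose l : ℚ_[p]) * (-q) ^ (n - l) / (1 + q ^ (l + 1)))) := by
  have hMo : ∀ N : ℕ, Odd (p ^ N) := fun N => hp.pow
  have hq' : ‖q - 1‖ < 1 := by rwa [norm_sub_rev] at hq
  have h2ne : (2 : ℚ_[p]) ≠ 0 := two_ne_zero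
  have hfun : ∀ N : ℕ, ((1 + q) / (1 - (-q) ^ (p ^ N)))
        * ∑ x ∈ Finset.range (p ^ N), (qnum q⁻¹ (1 - (x : ℤ))) ^ n * (-q) ^ x
      = ((1 + q) / (1 + q ^ (p ^ N)))
        * ∑ l ∈ Finset.range (n + 1),
            (n.choose l : ℚ_[p]) * (-q) ^ (n - l) / (1 - q) ^ n
              * ((1 + (q ^ (l + 1)) ^ (p ^ N)) / (1 + q ^ (l + 1))) := by
    intro N
    have h1 : (1 : ℚ_[p]) - (-q) ^ (p ^ N) = 1 + q ^ (p ^ N) := by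
      rw [(hMo N).neg_pow]; ring
    have h2 : ∑ x ∈ Finset.range (p ^ N), (qnum q⁻¹ (1 - (x : ℤ))) ^ n * (-q) ^ x
        = ∑ x ∈ Finset.range (p ^ N), ((q ^ x - q) / (1 - q)) ^ n * (-q) ^ x :=
      Finset.sum_congr rfl fun x _ => by rw [f_eq hq hq1 x]
    rw [h2, main_sum hp hq n (hMo N), h1]
  rw [show (fun N : ℕ => ((1 + q) / (1 - (-q) ^ (p ^ N)))
        * ∑ x ∈ Finset.range (p ^ N), (qnum q⁻¹ (1 - (x : ℤ))) ^ n * (-q) ^ x) = _ from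
      funext hfun]
  have ht1 : Tendsto (fun N : ℕ => q ^ p ^ N) atTop (nhds 1) := aux_tendsto hq'
  have hA : Tendsto (fun N : ℕ => (1 + q) / (1 + q ^ p ^ N)) atTop (nhds ((1 + q) / 2)) := by
    have : Tendsto (fun N : ℕ => 1 + q ^ p ^ N) atTop (nhds 2) := by
      have := tendsto_const_nhds (x := (1 : ℚ_[p])) (f := atTop (α := ℕ)) |>.add ht1
      simpa [one_add_one_eq_two] using this
    exact tendsto_const_nhds.div this h2ne
  have hB : Tendsto (fun N : ℕ => ∑ l ∈ Finset.range (n + 1),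
        (n.choose l : ℚ_[p]) * (-q) ^ (n - l) / (1 - q) ^ n
          * ((1 + (q ^ (l + 1)) ^ (p ^ N)) / (1 + q ^ (l + 1)))) atTop
      (nhds (∑ l ∈ Finset.range (n + 1),
        (n.choose l : ℚ_[p]) * (-q) ^ (n - l) / (1 - q) ^ n
          * (2 / (1 + q ^ (l + 1))))) := by
    refine tendsto_finset_sum _ fun l _ => ?_
    have hql : ‖q ^ (l + 1) - 1‖ < 1 :=
      lt_of_le_of_lt (aux_pow_sub_one (aux_norm_le hq) (l + 1)) hq'
    have ht2 : Tendsto (fun N : ℕ => (q ^ (l + 1)) ^ p ^ N) atTop (nhds 1) := aux_tendsto hql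
    have ht3 : Tendsto (fun N : ℕ => 1 + (q ^ (l + 1)) ^ p ^ N) atTop (nhds 2) := by
      have := tendsto_const_nhds (x := (1 : ℚ_[p])) (f := atTop (α := ℕ)) |>.add ht2
      simpa [one_add_one_eq_two] using this
    exact tendsto_const_nhds.mul (ht3.div_const _)
  have hfinal := hA.mul hB
  have hval : (1 + q) / 2 * (∑ l ∈ Finset.range (n + 1),
        (n.choose l : ℚ_[p]) * (-q) ^ (n - l) / (1 - q) ^ n * (2 / (1 + q ^ (l + 1))))
      = (1 + q) / (1 - q) ^ n * ∑ l ∈ Finset.range (n + 1),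
          (n.choose l : ℚ_[p]) * (-q) ^ (n - l) / (1 + q ^ (l + 1)) := by
    rw [Finset.mul_sum, Finset.mul_sum]
    refine Finset.sum_congr rfl fun l _ => ?_
    have hdl := hden hp hq l
    have h1 := h1q hq1
    field_simp
  rw [← hval]
  exact hfinal

lemma claimB (hp : Odd p) (hq : ‖1 - q‖ < 1) (hq1 : q ≠ 1) (n : ℕ) :
    (-1) ^ n * q ^ n * xi q n (-1)
      = (1 + q) / (1 - q) ^ n * ∑ l ∈ Finset.range (n + 1),
          (n.choose l : ℚ_[p]) * (-q) ^ (n - l) / (1 + q ^ (l + 1)) := by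
  have h0 := hq0 hq
  have h1 := h1q hq1
  rw [xi, Finset.mul_sum, Finset.mul_sum, Finset.mul_sum]
  refine Finset.sum_congr rfl fun l hl => ?_
  have hl' : l ≤ n := Nat.lt_succ_iff.mp (Finset.mem_range.mp hl)
  have hdl := hden hp hq l
  have hzp : q ^ ((l : ℤ) * (-1)) = (q ^ l)⁻¹ := by
    rw [mul_neg_one, zpow_neg, zpow_natCast]
  have e2 : ((-1 : ℚ_[p])) ^ (n - l) = (-1) ^ n * (-1) ^ l := by
    have hsq : ((-1 : ℚ_[p])) ^ l * (-1) ^ l = 1 := by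
      rw [← pow_add]; exact Even.neg_one_pow ⟨l, rfl⟩
    calc ((-1 : ℚ_[p])) ^ (n - l) = (-1) ^ (n - l) * ((-1) ^ l * (-1) ^ l) := by
          rw [hsq, mul_one]
      _ = ((-1) ^ (n - l) * (-1) ^ l) * (-1) ^ l := by ring
      _ = (-1) ^ n * (-1) ^ l := by rw [← pow_add, Nat.sub_add_cancel hl']
  have e1 : q ^ (n - l) = q ^ n * (q ^ l)⁻¹ := pow_sub₀ q h0 hl'
  rw [hzp, neg_pow q (n - l), e2, e1]
  have hql : (q : ℚ_[p]) ^ l ≠ 0 := pow_ne_zero _ h0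
  field_simp

lemma claimA (hp : Odd p) (hq : ‖1 - q‖ < 1) (hq1 : q ≠ 1) (n : ℕ) :
    ∑ l ∈ Finset.range (n + 1), (n.choose l : ℚ_[p]) * (-1) ^ l * xi q l 0
      = (1 + q) / (1 - q) ^ n * ∑ j ∈ Finset.range (n + 1),
          (n.choose j : ℚ_[p]) * (-q) ^ (n - j) / (1 + q ^ (j + 1)) := by
  have h0 := hq0 hq
  have h1 := h1q hq1
  -- expand xi at 0 into a double sum
  have hstep1 : ∑ l ∈ Finset.range (n + 1), (n.choose l : ℚ_[p]) * (-1) ^ l * xi q l 0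
      = ∑ l ∈ Finset.range (n + 1), ∑ j ∈ Finset.range (l + 1),
          (n.choose l : ℚ_[p]) * (-1) ^ l
            * ((1 + q) / (1 - q) ^ l * ((l.choose j : ℚ_[p]) * (-1) ^ j / (1 + q ^ (j + 1)))) := by
    refine Finset.sum_congr rfl fun l _ => ?_
    rw [xi, Finset.mul_sum, Finset.mul_sum]
    refine Finset.sum_congr rfl fun j _ => ?_
    norm_num
  rw [hstep1]
  rw [Finset.sum_comm' (t' := Finset.range (n + 1))
      (s' := fun j => Finset.Ico j (n + 1))
      (by intro l j
          simp only [Finset.mem_range, Finset.mem_Ico]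
          omega)]
  rw [Finset.mul_sum]
  refine Finset.sum_congr rfl fun j hj => ?_
  have hj' : j ≤ n := Nat.lt_succ_iff.mp (Finset.mem_range.mp hj)
  have hdj := hden hp hq j
  rw [Finset.sum_Ico_eq_sum_range]
  have hnj : n + 1 - j = (n - j) + 1 := by omega
  rw [hnj]
  -- rewrite each term as Const * (binomial term)
  set t : ℚ_[p] := -(1 - q)⁻¹ with ht_def
  have hterm : ∀ m ∈ Finset.range ((n - j) + 1),
      (n.choose (j + m) : ℚ_[p]) * (-1) ^ (j + m)
          * ((1 + q) / (1 - q) ^ (j + m)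
            * (((j + m).choose j : ℚ_[p]) * (-1) ^ j / (1 + q ^ (j + 1))))
        = ((n.choose j : ℚ_[p]) * (1 + q) / ((1 - q) ^ j * (1 + q ^ (j + 1))))
            * (t ^ m * 1 ^ (n - j - m) * ((n - j).choose m : ℚ_[p])) := by
    intro m hm
    have hm' : m ≤ n - j := Nat.lt_succ_iff.mp (Finset.mem_range.mp hm)
    have hchoose : (n.choose (j + m) : ℚ_[p]) * ((j + m).choose j : ℚ_[p])
        = (n.choose j : ℚ_[p]) * ((n - j).choose m : ℚ_[p]) := by
      have := Nat.choose_mul (n := n) (show j ≤ j + m by omega)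
      have h2 : (j + m) - j = m := by omega
      rw [h2] at this
      exact_mod_cast congrArg (fun k : ℕ => (k : ℚ_[p])) this
    have hsq : ((-1 : ℚ_[p])) ^ j * (-1) ^ j = 1 := by
      rw [← pow_add]; exact Even.neg_one_pow ⟨j, rfl⟩
    have hpow : ((1 : ℚ_[p]) - q) ^ (j + m) = (1 - q) ^ j * (1 - q) ^ m := pow_add _ _ _
    have hneg : ((-1 : ℚ_[p])) ^ (j + m) = (-1) ^ j * (-1) ^ m := pow_add _ _ _
    rw [hpow, hneg, ht_def, one_pow]
    have hqm : ((1 : ℚ_[p]) - q) ^ m ≠ 0 := pow_ne_zero _ h1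
    have hqj : ((1 : ℚ_[p]) - q) ^ j ≠ 0 := pow_ne_zero _ h1
    rw [neg_pow ((1 - q)⁻¹) m, inv_pow]
    simp only [div_eq_mul_inv, mul_inv]
    linear_combination
      (((-1 : ℚ_[p])^m * (1+q) * ((1-q)^j)⁻¹ * ((1-q)^m)⁻¹ * (1 + q^(j+1))⁻¹)
        * ((-1 : ℚ_[p])^j * (-1)^j)) * hchoose
      + (((-1 : ℚ_[p])^m * (1+q) * ((1-q)^j)⁻¹ * ((1-q)^m)⁻¹ * (1 + q^(j+1))⁻¹)
        * ((n.choose j : ℚ_[p]) * ((n - j).choose m : ℚ_[p]))) * hsq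
  rw [Finset.sum_congr rfl hterm, ← Finset.mul_sum, ← add_pow]
  -- now (t + 1) ^ (n - j) = (-q)^(n-j) / (1-q)^(n-j)
  have ht1 : t + 1 = -q / (1 - q) := by
    rw [ht_def]
    field_simp
    ring
  rw [ht1, div_pow]
  have hsplit : ((1 : ℚ_[p]) - q) ^ j * (1 - q) ^ (n - j) = (1 - q) ^ n := by
    rw [← pow_add, Nat.add_sub_cancel' hj']
  have hqj : ((1 : ℚ_[p]) - q) ^ j ≠ 0 := pow_ne_zero _ h1
  have hqnj : ((1 : ℚ_[p]) - q) ^ (n - j) ≠ 0 := pow_ne_zero _ h1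
  have hqn : ((1 : ℚ_[p]) - q) ^ n ≠ 0 := pow_ne_zero _ h1
  rw [← hsplit]
  field_simp

end aux

theorem stmt3 (p : ℕ) [Fact p.Prime] (hp : Odd p) (q : ℚ_[p]) (hq : ‖1 - q‖ < 1) (hq1 : q ≠ 1) (n : ℕ) :
    fermionicIntegral p q (fun x => (qnum q⁻¹ (1 - x)) ^ n)
      (∑ l ∈ Finset.range (n + 1), (n.choose l : ℚ_[p]) * (-1) ^ l * xi q l 0) ∧
      (∑ l ∈ Finset.range (n + 1), (n.choose l : ℚ_[p]) * (-1) ^ l * xi q l 0)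
        = (-1) ^ n * q ^ n * xi q n (-1) := by
  refine ⟨?_, (claimA hp hq hq1 n).trans (claimB hp hq hq1 n).symm⟩
  rw [fermionicIntegral, claimA hp hq hq1 n]
  exact integral_tendsto hp hq hq1 n
end

section
/- (Proposition 3, equations (13)–(14)) For every integer n ≥ 0 and every integer x, the fermionic p-adic (1/q)-integral of x₁ ↦ [1−x+x₁]_{1/q}^n exists and ∫_{ℤ_p} [1−x+x₁]_{1/q}^n dμ_{−1/q}(x₁) = (−1)^n·q^n·ξ_{n,q}(x) = (−1)^n·q^n·((1+q)/(1−q)^n)·Σ_{l=0}^{n} C(n,l)·(−1)^l·q^{l·x}/(1+q^{l+1}); in particular it equals (−1)^n·q^n·∫_{ℤ_p} [x+x₁]_q^n dμ_{−q}(x₁). -/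
open Finset Filter

section Aux
variable {p : ℕ} [Fact p.Prime]

variable {p : ℕ} [Fact p.Prime]

lemma norm_q_eq_one (q : ℚ_[p]) (hq : ‖1 - q‖ < 1) : ‖q‖ = 1 := by
  have h : q = 1 + -(1 - q) := by ring
  have h2 : ‖(1:ℚ_[p])‖ ≠ ‖-(1 - q)‖ := by
    rw [norm_neg, norm_one]; exact ne_of_gt hq
  rw [h, Padic.add_eq_max_of_ne h2, norm_neg, norm_one]
  exact max_eq_left hq.le

lemma unit_pow_nat (q : ℚ_[p]) (hq : ‖1 - q‖ < 1) : ∀ k : ℕ, ‖1 - q ^ k‖ < 1 := by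
  intro k
  induction k with
  | zero => simp
  | succ k ih =>
    have h : 1 - q ^ (k+1) = (1 - q ^ k) + q ^ k * (1 - q) := by ring
    rw [h]
    refine lt_of_le_of_lt (Padic.nonarchimedean _ _) (max_lt ih ?_)
    rw [norm_mul, norm_pow, norm_q_eq_one q hq, one_pow, one_mul]; exact hq

lemma unit_zpow (q : ℚ_[p]) (hq : ‖1 - q‖ < 1) (m : ℤ) : ‖1 - q ^ m‖ < 1 := by
  have hq0 : q ≠ 0 := by
    intro h; rw [h] at hq; norm_num at hq
  rcases le_or_gt 0 m with h | h
  · lift m to ℕ using h; rw [zpow_natCast]; exact unit_pow_nat q hq _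
  · have hzm : q ^ m ≠ 0 := zpow_ne_zero _ hq0
    have key : 1 - q ^ m = -(q ^ m) * (1 - q ^ (-m)) := by
      have h1 : q ^ m * q ^ (-m) = 1 := by rw [← zpow_add₀ hq0]; simp
      ring_nf
      linear_combination -h1
    rw [key, norm_mul, norm_neg]
    have hn : ‖q ^ m‖ = 1 := by rw [norm_zpow, norm_q_eq_one q hq, one_zpow]
    rw [hn, one_mul]
    obtain ⟨k, hk⟩ : ∃ k : ℕ, -m = (k:ℤ) := ⟨(-m).toNat, by omega⟩
    rw [hk, zpow_natCast]
    exact unit_pow_nat q hq _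

lemma norm_two (hp : Odd p) : ‖(2:ℚ_[p])‖ = 1 := by
  have hle : ‖((2:ℤ):ℚ_[p])‖ ≤ 1 := Padic.norm_int_le_one 2
  have hnd : ¬ ((p:ℤ) ∣ 2) := by
    intro hdvd
    have hp2 : (p:ℤ) ≤ 2 := Int.le_of_dvd (by norm_num) hdvd
    have := (Fact.out : p.Prime).two_le
    obtain ⟨k, hk⟩ := hp
    omega
  have hge := (Padic.norm_intCast_lt_one_iff (p := p) (k := 2)).not.mpr hnd
  push_neg at hge
  have := le_antisymm hle hge
  exact_mod_cast this

lemma one_add_pow_ne (hp : Odd p) (q : ℚ_[p]) (hq : ‖1 - q‖ < 1) (m : ℤ) : 1 + q ^ m ≠ 0 := by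
  have h2 := norm_two (p := p) hp
  have key : 1 + q ^ m = 2 + -(1 - q ^ m) := by ring
  have hne : ‖(2:ℚ_[p])‖ ≠ ‖-(1 - q ^ m)‖ := by
    rw [norm_neg, h2]; exact ne_of_gt (unit_zpow q hq m)
  intro hzero
  have heq := Padic.add_eq_max_of_ne hne
  rw [← key, hzero, norm_zero, norm_neg, h2,
    max_eq_left (unit_zpow q hq m).le] at heq
  norm_num at heq

lemma one_add_pow_ne' (hp : Odd p) (q : ℚ_[p]) (hq : ‖1 - q‖ < 1) (m : ℕ) : 1 + q ^ m ≠ 0 := by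
  have := one_add_pow_ne hp q hq m
  rwa [zpow_natCast] at this

lemma unit_pow_nat_le (u : ℚ_[p]) (hu : ‖u‖ ≤ 1) : ∀ k : ℕ, ‖1 - u ^ k‖ ≤ ‖1 - u‖ := by
  intro k
  induction k with
  | zero => simp
  | succ k ih =>
    have h : 1 - u ^ (k+1) = (1 - u ^ k) + u ^ k * (1 - u) := by ring
    rw [h]
    refine le_trans (Padic.nonarchimedean _ _) (max_le ih ?_)
    rw [norm_mul, norm_pow]
    calc ‖u‖ ^ k * ‖1 - u‖ ≤ 1 * ‖1 - u‖ :=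
          mul_le_mul_of_nonneg_right (pow_le_one₀ (norm_nonneg _) hu) (norm_nonneg _)
      _ = ‖1 - u‖ := one_mul _

lemma step_pow (u : ℚ_[p]) (hu : ‖1 - u‖ < 1) (c : ℝ) (hc : ‖1 - u‖ ≤ c) (hpc : ((p:ℝ))⁻¹ ≤ c) :
    ‖1 - u ^ p‖ ≤ ‖1 - u‖ * c := by
  have hun : ‖u‖ = 1 := norm_q_eq_one u hu
  have key : 1 - u ^ p = (1 - u) * (∑ j ∈ range p, u ^ j) := by
    have := geom_sum_mul u p
    linear_combination this
  rw [key, norm_mul]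
  refine mul_le_mul_of_nonneg_left ?_ (norm_nonneg _)
  have split : (∑ j ∈ range p, u ^ j) = (∑ j ∈ range p, (u ^ j - 1)) + (p : ℚ_[p]) := by
    rw [Finset.sum_sub_distrib]
    simp
  rw [split]
  refine le_trans (Padic.nonarchimedean _ _) (max_le ?_ ?_)
  · refine IsUltrametricDist.norm_sum_le_of_forall_le_of_nonneg (le_trans (norm_nonneg _) hc) ?_
    intro j _
    rw [← norm_neg, neg_sub]
    exact le_trans (unit_pow_nat_le u hun.le j) hc
  · rw [Padic.norm_p]
    exact hpc

lemma key_tendsto (q : ℚ_[p]) (hq : ‖1 - q‖ < 1) :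
    Tendsto (fun N : ℕ => q ^ (p ^ N)) atTop (nhds 1) := by
  set ε := ‖1 - q‖ with hε
  set c : ℝ := max ε (p:ℝ)⁻¹ with hc
  have hp2 := (Fact.out : p.Prime).two_le
  have hc1 : c < 1 := by
    apply max_lt hq
    rw [inv_lt_one_iff₀]
    right; exact_mod_cast by omega
  have hc0 : 0 ≤ c := le_trans (norm_nonneg _) (le_max_left _ _)
  have bound : ∀ N : ℕ, ‖1 - q ^ (p ^ N)‖ ≤ ε * c ^ N := by
    intro N
    induction N with
    | zero => simp [hε]
    | succ N ih =>
      have hlt : ‖1 - q ^ (p ^ N)‖ < 1 := by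
        refine lt_of_le_of_lt ih (lt_of_le_of_lt ?_ hq)
        calc ε * c ^ N ≤ ε * 1 := by
              refine mul_le_mul_of_nonneg_left (pow_le_one₀ hc0 hc1.le) (norm_nonneg _)
          _ = ε := mul_one _
      have hcc : ‖1 - q ^ (p ^ N)‖ ≤ c := by
        refine le_trans ih ?_
        calc ε * c ^ N ≤ ε * 1 := by
              exact mul_le_mul_of_nonneg_left (pow_le_one₀ hc0 hc1.le) (norm_nonneg _)
          _ = ε := mul_one _
          _ ≤ c := le_max_left _ _
      have := step_pow (q ^ (p ^ N)) hlt c hcc (le_max_right _ _)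
      rw [← pow_mul, ← pow_succ] at this
      refine le_trans this ?_
      calc ‖1 - q ^ p ^ N‖ * c ≤ (ε * c ^ N) * c := by
            exact mul_le_mul_of_nonneg_right ih hc0
        _ = ε * c ^ (N + 1) := by ring
  have h0 : Tendsto (fun N : ℕ => ε * c ^ N) atTop (nhds 0) := by
    have := tendsto_pow_atTop_nhds_zero_of_lt_one hc0 hc1
    simpa using this.const_mul ε
  have hz : Tendsto (fun N : ℕ => (1:ℚ_[p]) - q ^ (p ^ N)) atTop (nhds 0) := by
    rw [tendsto_zero_iff_norm_tendsto_zero]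
    exact squeeze_zero (fun N => norm_nonneg _) bound h0
  have final : Tendsto (fun N : ℕ => (1:ℚ_[p]) - (1 - q ^ (p ^ N))) atTop (nhds (1 - 0)) :=
    Tendsto.sub tendsto_const_nhds hz
  simpa using final

lemma one_sub_pow_eq (w : ℚ_[p]) (n : ℕ) :
    (1 - w) ^ n = ∑ l ∈ range (n+1), (n.choose l : ℚ_[p]) * (-1)^l * w^l := by
  rw [sub_eq_add_neg, add_comm, add_pow]
  refine Finset.sum_congr rfl fun l hl => ?_
  rw [one_pow, neg_pow]
  ring

lemma main_integral (hp : Odd p) (q : ℚ_[p]) (hq : ‖1 - q‖ < 1) (hq1 : q ≠ 1) (n : ℕ) (a : ℤ) :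
    fermionicIntegral p q (fun y => (qnum q (a + y)) ^ n) (xi q n a) := by
  have hq0 : q ≠ 0 := fun h => by rw [h] at hq; norm_num at hq
  have hne : ∀ m : ℕ, (1:ℚ_[p]) + q ^ m ≠ 0 := fun m => one_add_pow_ne' hp q hq m
  have h1q : (1:ℚ_[p]) - q ≠ 0 := sub_ne_zero_of_ne (Ne.symm hq1)
  set F : ℚ_[p] → ℚ_[p] := fun t =>
    ((1 + q) / (1 + t)) * (((1 - q) ^ n)⁻¹ *
      ∑ l ∈ range (n+1), (n.choose l : ℚ_[p]) * (-1)^l * q^((l:ℤ)*a)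
        * ((1 + t^(l+1)) / (1 + q^(l+1)))) with hF
  have hcontG : Continuous (fun t : ℚ_[p] => ((1 - q) ^ n)⁻¹ *
      ∑ l ∈ range (n+1), (n.choose l : ℚ_[p]) * (-1)^l * q^((l:ℤ)*a)
        * ((1 + t^(l+1)) / (1 + q^(l+1)))) := by
    refine continuous_const.mul (continuous_finset_sum _ fun l _ => ?_)
    exact continuous_const.mul ((continuous_const.add (continuous_pow (l+1))).div_const _)
  have hcont : ContinuousAt F 1 := by
    rw [hF]
    refine ContinuousAt.mul ?_ hcontG.continuousAt
    refine ContinuousAt.div continuousAt_const (continuous_add_left 1).continuousAt ?_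
    norm_num
  have hF1 : F 1 = xi q n a := by
    rw [hF, xi]
    simp only [one_pow]
    have hsum1 : ∑ l ∈ range (n+1), (n.choose l : ℚ_[p]) * (-1)^l * q^((l:ℤ)*a)
          * ((1 + (1:ℚ_[p])) / (1 + q^(l+1)))
        = 2 * ∑ l ∈ range (n+1),
            (n.choose l : ℚ_[p]) * (-1)^l * q^((l:ℤ)*a) / (1 + q^(l+1)) := by
      rw [Finset.mul_sum]
      refine Finset.sum_congr rfl fun l _ => ?_
      have h2 : (1:ℚ_[p]) + 1 = 2 := by norm_num
      rw [h2]; ring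
    rw [hsum1]
    have hpow : ((1:ℚ_[p]) - q) ^ n ≠ 0 := pow_ne_zero _ h1q
    field_simp
    ring
  have hE : ∀ N : ℕ, ((1 + q) / (1 - (-q) ^ (p ^ N))) *
      ∑ y ∈ range (p ^ N), (qnum q (a + y)) ^ n * (-q) ^ y = F (q ^ (p ^ N)) := by
    intro N
    set M := p ^ N with hM
    have hModd : Odd M := hp.pow
    have hstep1 : (1:ℚ_[p]) - (-q) ^ M = 1 + q ^ M := by
      rw [hModd.neg_pow]; ring
    have hterm : ∀ y : ℕ, (qnum q (a + y)) ^ n * (-q) ^ y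
        = ((1 - q) ^ n)⁻¹ * ∑ l ∈ range (n+1),
            (n.choose l : ℚ_[p]) * (-1)^l * q^((l:ℤ)*a) * (-(q^(l+1)))^y := by
      intro y
      have e1 : qnum q (a + (y:ℕ)) = (1 - q^(a:ℤ) * q^(y:ℕ)) / (1 - q) := by
        rw [qnum, zpow_add₀ hq0, zpow_natCast]
      calc (qnum q (a + y)) ^ n * (-q)^y
          = ((1-q)^n)⁻¹ * ((1 - q^(a:ℤ) * q^(y:ℕ))^n * (-q)^y) := by
            rw [e1, div_pow]; ring
        _ = ((1-q)^n)⁻¹ * ∑ l ∈ range (n+1),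
              (n.choose l : ℚ_[p]) * (-1)^l * (q^(a:ℤ) * q^(y:ℕ))^l * (-q)^y := by
            rw [one_sub_pow_eq (q^(a:ℤ) * q^(y:ℕ)) n, Finset.sum_mul]
        _ = ((1-q)^n)⁻¹ * ∑ l ∈ range (n+1),
              (n.choose l : ℚ_[p]) * (-1)^l * q^((l:ℤ)*a) * (-(q^(l+1)))^y := by
            congr 1
            refine Finset.sum_congr rfl fun l _ => ?_
            have ha : q ^ ((l:ℤ)*a) = (q ^ (a:ℤ)) ^ l := by
              rw [mul_comm, zpow_mul, zpow_natCast]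
            rw [ha, mul_pow, pow_right_comm q y l, neg_pow (q^(l+1)), neg_pow q,
              pow_succ, mul_pow]
            ring
    have hsum : ∑ y ∈ range M, (qnum q (a + y))^n * (-q)^y
        = ((1-q)^n)⁻¹ * ∑ l ∈ range (n+1),
            (n.choose l : ℚ_[p]) * (-1)^l * q^((l:ℤ)*a)
              * ((1 + (q^M)^(l+1))/(1 + q^(l+1))) := by
      rw [Finset.sum_congr rfl (fun y _ => hterm y), ← Finset.mul_sum, Finset.sum_comm]
      congr 1
      refine Finset.sum_congr rfl fun l _ => ?_
      rw [← Finset.mul_sum]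
      congr 1
      have hr1 : -(q^(l+1)) ≠ 1 := by
        intro h
        apply hne (l+1)
        linear_combination -h
      rw [geom_sum_eq hr1, hModd.neg_pow, pow_right_comm,
        show -((q^M)^(l+1)) - 1 = -(1 + (q^M)^(l+1)) by ring,
        show -(q^(l+1)) - 1 = -(1 + q^(l+1)) by ring, neg_div_neg_eq]
    rw [hstep1, hsum, hF]
  have hT : Tendsto (fun N : ℕ => F (q ^ (p ^ N))) atTop (nhds (xi q n a)) := by
    rw [← hF1]
    exact (hcont.tendsto).comp (key_tendsto q hq)
  rw [fermionicIntegral]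
  exact Tendsto.congr (fun N => (hE N).symm) hT

lemma xi_inv (hp : Odd p) (q : ℚ_[p]) (hq : ‖1 - q‖ < 1) (hq1 : q ≠ 1) (n : ℕ) (x : ℤ) :
    xi q⁻¹ n (1 - x) = (-1)^n * q^n * xi q n x := by
  have hq0 : q ≠ 0 := fun h => by rw [h] at hq; norm_num at hq
  have hqinv : ‖1 - q⁻¹‖ < 1 := by
    have e : 1 - q⁻¹ = -(q⁻¹) * (1 - q) := by field_simp; ring
    rw [e, norm_mul, norm_neg, norm_inv, norm_q_eq_one q hq]
    simpa using hq
  have h1q : (1:ℚ_[p]) - q ≠ 0 := sub_ne_zero_of_ne (Ne.symm hq1)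
  have hne := one_add_pow_ne' hp q hq
  have hne' := one_add_pow_ne' hp q⁻¹ hqinv
  rw [xi, xi]
  have key : ∀ l ∈ range (n+1),
      (n.choose l : ℚ_[p]) * (-1)^l * (q⁻¹)^((l:ℤ)*(1-x)) / (1 + (q⁻¹)^(l+1))
      = q * ((n.choose l : ℚ_[p]) * (-1)^l * q^((l:ℤ)*x) / (1 + q^(l+1))) := by
    intro l _
    have hD : (1:ℚ_[p]) + q^(l+1) ≠ 0 := hne (l+1)
    have hD' : (1:ℚ_[p]) + (q⁻¹)^(l+1) ≠ 0 := hne' (l+1)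
    have hql : q ^ (l:ℕ) ≠ 0 := pow_ne_zero _ hq0
    have e1 : (q⁻¹)^((l:ℤ)*(1-x)) = q^((l:ℤ)*x) * (q^(l:ℕ))⁻¹ := by
      rw [inv_zpow, ← zpow_neg,
        show -((l:ℤ)*(1-x)) = (l:ℤ)*x + (-(l:ℤ)) by ring,
        zpow_add₀ hq0, zpow_neg, zpow_natCast]
    have e2 : (q⁻¹)^(l+1) = (q^(l+1))⁻¹ := inv_pow q (l+1)
    rw [e2] at hD'
    rw [e1, e2]
    have hql1 : q ^ (l+1) ≠ 0 := pow_ne_zero _ hq0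
    have e3 : 1 + (q^(l+1))⁻¹ = (1 + q^(l+1)) / q^(l+1) := by field_simp; ring
    rw [e3, div_div_eq_mul_div, ← mul_div_assoc]
    congr 1
    rw [pow_succ]
    field_simp
  rw [Finset.sum_congr rfl key, ← Finset.mul_sum]
  have e4 : (1 - q⁻¹)^n = (-1)^n * (1-q)^n * (q^n)⁻¹ := by
    have e5 : 1 - q⁻¹ = (-1) * (1-q) * q⁻¹ := by field_simp; ring
    rw [e5, mul_pow, mul_pow, inv_pow]
  rw [e4]
  have h1qn : (1-q)^n ≠ 0 := pow_ne_zero _ h1q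
  have hqn : q^n ≠ 0 := pow_ne_zero _ hq0
  have hm1 : ((-1:ℚ_[p]))^n ≠ 0 := pow_ne_zero _ (by norm_num)
  have hsq : ((-1:ℚ_[p]))^n * ((-1:ℚ_[p]))^n = 1 := by
    rw [← pow_add]
    exact Even.neg_one_pow ⟨n, rfl⟩
  have hcoeff : (1+q⁻¹)/((-1)^n*(1-q)^n*(q^n)⁻¹) * q
      = (-1)^n * q^n * ((1+q)/(1-q)^n) := by
    field_simp
    linear_combination (-q - 1) * hsq
  linear_combination (∑ l ∈ range (n + 1),
    (n.choose l : ℚ_[p]) * (-1) ^ l * q ^ ((l:ℤ) * x) / (1 + q ^ (l + 1))) * hcoeff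

end Aux

theorem stmt4 (p : ℕ) [Fact p.Prime] (hp : Odd p) (q : ℚ_[p]) (hq : ‖1 - q‖ < 1) (hq1 : q ≠ 1) (n : ℕ) (x : ℤ) :
    fermionicIntegral p q⁻¹ (fun x₁ => (qnum q⁻¹ (1 - x + x₁)) ^ n) ((-1) ^ n * q ^ n * xi q n x) ∧
      (-1) ^ n * q ^ n * xi q n x
        = (-1) ^ n * q ^ n * ((1 + q) / (1 - q) ^ n) *
            ∑ l ∈ Finset.range (n + 1),
              (n.choose l : ℚ_[p]) * (-1) ^ l * q ^ ((l : ℤ) * x) / (1 + q ^ (l + 1)) ∧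
      fermionicIntegral p q (fun x₁ => (qnum q (x + x₁)) ^ n) (xi q n x) := by
  
  have hq0 : q ≠ 0 := fun h => by rw [h] at hq; norm_num at hq
  have hqinv : ‖1 - q⁻¹‖ < 1 := by
    have e : 1 - q⁻¹ = -(q⁻¹) * (1 - q) := by field_simp; ring
    rw [e, norm_mul, norm_neg, norm_inv, norm_q_eq_one q hq]
    simpa using hq
  have hqinv1 : q⁻¹ ≠ 1 := fun h => hq1 (by rw [← inv_inv q, h, inv_one])
  refine ⟨?_, ?_, ?_⟩
  · have h := main_integral hp q⁻¹ hqinv hqinv1 n (1 - x)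
    rwa [xi_inv hp q hq hq1 n x] at h
  · rw [xi]; ring
  · exact main_integral hp q hq hq1 n x
end
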